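/- Fix k ∈ {1, …, n}. The dual cone of the sum-of-largest-eigenvalues cone K_mSum = {(t, X) ∈ ℝ × Sⁿ : ∑_{i=1}^k λ_i(X) ≤ t}, with respect to the inner product ⟨(t,X),(s,Y)⟩ = t s + Tr(XY), equals {(t, X) ∈ ℝ × Sⁿ : −t ≤ λ_i(X) ≤ 0 for i = 1, …, n, and ∑_{i=1}^n λ_i(X) = −t k}. -/

import Mathlib

open Matrix Finset

/-- The entries of `x` sorted in nonincreasing order. -/
noncomputable def sortDesc {n : ℕ} (x : Fin n → ℝ) : Fin n → ℝ :=
  fun i => (x ∘ Tuple.sort x) i.rev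

open Classical in
/-- The eigenvalues of a real symmetric matrix in nonincreasing order,
so `eigsDesc X i = λ_{i+1}(X)` (`λ₁(X) ≥ … ≥ λ_n(X)` in one-based notation);
junk value `0` if the matrix is not symmetric. -/
noncomputable def eigsDesc {n : ℕ} (X : Matrix (Fin n) (Fin n) ℝ) : Fin n → ℝ :=
  if h : X.IsHermitian then sortDesc h.eigenvalues else 0

namespace Stmt10Aux

variable {n : ℕ}

/-- The permutation such that `sortDesc x = x ∘ descPerm x`. -/
noncomputable def descPerm (x : Fin n → ℝ) : Equiv.Perm (Fin n) :=
  Fin.revPerm.trans (Tuple.sort x)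

lemma sortDesc_eq_comp (x : Fin n → ℝ) : sortDesc x = x ∘ (descPerm x) := rfl

lemma sum_sortDesc (x : Fin n → ℝ) : ∑ i, sortDesc x i = ∑ i, x i := by
  rw [sortDesc_eq_comp]; exact Equiv.sum_comp (descPerm x) x

lemma antitone_sortDesc (x : Fin n → ℝ) : Antitone (sortDesc x) := by
  intro i j hij
  exact Tuple.monotone_sort x (Fin.rev_le_rev.mpr hij)

lemma eigsDesc_herm {X : Matrix (Fin n) (Fin n) ℝ} (hX : X.IsHermitian) :
    eigsDesc X = sortDesc hX.eigenvalues := by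
  rw [eigsDesc, dif_pos hX]

lemma eigsDesc_apply {X : Matrix (Fin n) (Fin n) ℝ} (hX : X.IsHermitian) (i : Fin n) :
    eigsDesc X i = hX.eigenvalues (descPerm hX.eigenvalues i) := by
  rw [eigsDesc_herm hX, sortDesc_eq_comp]; rfl

lemma spectral_affine {Y : Matrix (Fin n) (Fin n) ℝ} (hY : Y.IsHermitian) (α β : ℝ) :
    α • Y + β • (1 : Matrix (Fin n) (Fin n) ℝ) =
      (hY.eigenvectorUnitary : Matrix (Fin n) (Fin n) ℝ) *
        diagonal (fun i => α * hY.eigenvalues i + β) *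
        star (hY.eigenvectorUnitary : Matrix (Fin n) (Fin n) ℝ) := by
  set U := (hY.eigenvectorUnitary : Matrix (Fin n) (Fin n) ℝ) with hUdef
  have hU : U * star U = 1 := (Matrix.mem_unitaryGroup_iff).mp hY.eigenvectorUnitary.2
  have hd : diagonal (fun i => α * hY.eigenvalues i + β)
      = α • diagonal (RCLike.ofReal ∘ hY.eigenvalues) + β • (1 : Matrix (Fin n) (Fin n) ℝ) := by
    rw [Matrix.smul_one_eq_diagonal, ← Matrix.diagonal_smul, ← Matrix.diagonal_add]
    congr 1
  rw [hd, Matrix.mul_add, Matrix.add_mul, mul_smul_comm, smul_mul_assoc, mul_smul_comm,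
    smul_mul_assoc, mul_one, hU]
  conv_lhs => rw [hY.spectral_theorem, Unitary.conjStarAlgAut_apply]

lemma psd_affine {Y : Matrix (Fin n) (Fin n) ℝ} (hY : Y.IsHermitian) (α β : ℝ)
    (h : ∀ i, 0 ≤ α * hY.eigenvalues i + β) :
    (α • Y + β • (1 : Matrix (Fin n) (Fin n) ℝ)).PosSemidef := by
  rw [spectral_affine hY α β, Matrix.star_eq_conjTranspose]
  exact (Matrix.posSemidef_diagonal_iff.mpr h).mul_mul_conjTranspose_same _

/-- quadratic form upper bound from eigenvalue upper bound -/
lemma quad_le {Y : Matrix (Fin n) (Fin n) ℝ} (hY : Y.IsHermitian) (b : ℝ)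
    (h : ∀ i, hY.eigenvalues i ≤ b) (v : Fin n → ℝ) :
    v ⬝ᵥ (Y *ᵥ v) ≤ b * (v ⬝ᵥ v) := by
  have hp := (psd_affine hY (-1) b (fun i => by nlinarith [h i])).dotProduct_mulVec_nonneg v
  simp only [Matrix.add_mulVec, Matrix.smul_mulVec, Matrix.one_mulVec,
    dotProduct_add, dotProduct_smul, star_trivial, smul_eq_mul, neg_one_mul] at hp
  linarith

lemma le_quad {Y : Matrix (Fin n) (Fin n) ℝ} (hY : Y.IsHermitian) (a : ℝ)
    (h : ∀ i, a ≤ hY.eigenvalues i) (v : Fin n → ℝ) :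
    a * (v ⬝ᵥ v) ≤ v ⬝ᵥ (Y *ᵥ v) := by
  have hp := (psd_affine hY 1 (-a) (fun i => by nlinarith [h i])).dotProduct_mulVec_nonneg v
  simp only [Matrix.add_mulVec, Matrix.smul_mulVec, Matrix.one_mulVec,
    dotProduct_add, dotProduct_smul, star_trivial, smul_eq_mul, one_mul] at hp
  linarith

lemma dot_eigenvectorBasis {Y : Matrix (Fin n) (Fin n) ℝ} (hY : Y.IsHermitian) (i : Fin n) :
    ⇑(hY.eigenvectorBasis i) ⬝ᵥ ⇑(hY.eigenvectorBasis i) = 1 := by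
  have h := hY.eigenvectorBasis.orthonormal.1 i
  have h2 : (inner ℝ (hY.eigenvectorBasis i) (hY.eigenvectorBasis i) : ℝ) = 1 := by
    rw [real_inner_self_eq_norm_mul_norm, h]; norm_num
  rw [← h2, PiLp.inner_apply]
  simp [dotProduct, mul_comm, sq]

lemma eig_le_of_quad {Y : Matrix (Fin n) (Fin n) ℝ} (hY : Y.IsHermitian) (c : ℝ)
    (h : ∀ v : Fin n → ℝ, v ⬝ᵥ (Y *ᵥ v) ≤ c * (v ⬝ᵥ v)) (i : Fin n) :
    hY.eigenvalues i ≤ c := by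
  have he := hY.eigenvalues_eq i
  have hv := dot_eigenvectorBasis hY i
  have h3 := h ⇑(hY.eigenvectorBasis i)
  rw [hv, mul_one] at h3
  simpa [he, star_trivial] using h3

lemma le_eig_of_quad {Y : Matrix (Fin n) (Fin n) ℝ} (hY : Y.IsHermitian) (c : ℝ)
    (h : ∀ v : Fin n → ℝ, c * (v ⬝ᵥ v) ≤ v ⬝ᵥ (Y *ᵥ v)) (i : Fin n) :
    c ≤ hY.eigenvalues i := by
  have he := hY.eigenvalues_eq i
  have hv := dot_eigenvectorBasis hY i
  have h3 := h ⇑(hY.eigenvectorBasis i)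
  rw [hv, mul_one] at h3
  simpa [he, star_trivial] using h3

lemma trace_eq_sum_eigs {Y : Matrix (Fin n) (Fin n) ℝ} (hY : Y.IsHermitian) :
    Y.trace = ∑ i, hY.eigenvalues i := by
  nth_rewrite 1 [hY.spectral_theorem]
  rw [Unitary.conjStarAlgAut_apply, Matrix.trace_mul_cycle]
  have hU : star (hY.eigenvectorUnitary : Matrix (Fin n) (Fin n) ℝ) *
      (hY.eigenvectorUnitary : Matrix (Fin n) (Fin n) ℝ) = 1 :=
    (Matrix.mem_unitaryGroup_iff').mp hY.eigenvectorUnitary.2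
  rw [hU, one_mul, Matrix.trace_diagonal]
  rfl

lemma sum_eigsDesc_eq_trace {Y : Matrix (Fin n) (Fin n) ℝ} (hY : Y.IsHermitian) :
    ∑ i, eigsDesc Y i = Y.trace := by
  rw [eigsDesc_herm hY, sum_sortDesc, trace_eq_sum_eigs hY]

lemma trace_mul_expand {X Y : Matrix (Fin n) (Fin n) ℝ} (hX : X.IsHermitian) :
    (X * Y).trace = ∑ j, hX.eigenvalues j *
      ((star (hX.eigenvectorUnitary : Matrix (Fin n) (Fin n) ℝ) * Y *
        (hX.eigenvectorUnitary : Matrix (Fin n) (Fin n) ℝ)) j j) := by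
  set U := (hX.eigenvectorUnitary : Matrix (Fin n) (Fin n) ℝ)
  set f := (RCLike.ofReal ∘ hX.eigenvalues : Fin n → ℝ)
  nth_rewrite 1 [hX.spectral_theorem]
  have e1 : (U * diagonal f * star U) * Y = U * (diagonal f * (star U * Y)) := by
    simp only [mul_assoc]
  rw [Unitary.conjStarAlgAut_apply, e1, Matrix.trace_mul_comm]
  have e2 : diagonal f * (star U * Y) * U = diagonal f * (star U * Y * U) := by
    simp only [mul_assoc]
  rw [e2, Matrix.trace]
  simp only [Matrix.diag_apply, Matrix.diagonal_mul]
  rfl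

lemma diag_entry_eq_dot {Y : Matrix (Fin n) (Fin n) ℝ} (U : Matrix (Fin n) (Fin n) ℝ) (j : Fin n) :
    (star U * Y * U) j j = (fun i => U i j) ⬝ᵥ (Y *ᵥ fun i => U i j) := by
  simp [Matrix.mul_apply, Matrix.mulVec, dotProduct, Matrix.star_eq_conjTranspose,
    Matrix.conjTranspose_apply, Finset.mul_sum, Finset.sum_mul]
  rw [Finset.sum_comm]
  refine Finset.sum_congr rfl fun a _ => Finset.sum_congr rfl fun b _ => by ring

lemma sum_diag_eq_trace {Y : Matrix (Fin n) (Fin n) ℝ} {X : Matrix (Fin n) (Fin n) ℝ}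
    (hX : X.IsHermitian) :
    ∑ j, ((star (hX.eigenvectorUnitary : Matrix (Fin n) (Fin n) ℝ) * Y *
        (hX.eigenvectorUnitary : Matrix (Fin n) (Fin n) ℝ)) j j) = Y.trace := by
  have hU : (hX.eigenvectorUnitary : Matrix (Fin n) (Fin n) ℝ) *
      star (hX.eigenvectorUnitary : Matrix (Fin n) (Fin n) ℝ) = 1 :=
    (Matrix.mem_unitaryGroup_iff).mp hX.eigenvectorUnitary.2
  have h : ∑ j, ((star (hX.eigenvectorUnitary : Matrix (Fin n) (Fin n) ℝ) * Y *
        (hX.eigenvectorUnitary : Matrix (Fin n) (Fin n) ℝ)) j j)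
      = (star (hX.eigenvectorUnitary : Matrix (Fin n) (Fin n) ℝ) * Y *
        (hX.eigenvectorUnitary : Matrix (Fin n) (Fin n) ℝ)).trace := rfl
  rw [h, Matrix.trace_mul_cycle, hU, one_mul]

lemma column_unit {X : Matrix (Fin n) (Fin n) ℝ} (hX : X.IsHermitian) (j : Fin n) :
    ((fun i => (hX.eigenvectorUnitary : Matrix (Fin n) (Fin n) ℝ) i j) ⬝ᵥ
      fun i => (hX.eigenvectorUnitary : Matrix (Fin n) (Fin n) ℝ) i j) = 1 := by
  have h := (diag_entry_eq_dot (Y := (1 : Matrix (Fin n) (Fin n) ℝ))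
    (hX.eigenvectorUnitary : Matrix (Fin n) (Fin n) ℝ) j).symm
  have hU : star (hX.eigenvectorUnitary : Matrix (Fin n) (Fin n) ℝ) *
      (hX.eigenvectorUnitary : Matrix (Fin n) (Fin n) ℝ) = 1 :=
    (Matrix.mem_unitaryGroup_iff').mp hX.eigenvectorUnitary.2
  rw [Matrix.one_mulVec] at h
  rw [h, mul_one, hU]
  simp [Matrix.one_apply]

lemma sum_ite_const {k : ℕ} (hkn : k ≤ n) (c : ℝ) :
    ∑ i : Fin n, (if (i : ℕ) < k then c else 0) = k * c := by
  rw [Fin.sum_univ_eq_sum_range (fun i => if i < k then c else 0)]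
  have hf : (Finset.range n).filter (fun i => i < k) = Finset.range k := by
    ext i; simp; omega
  rw [← Finset.sum_filter, hf, Finset.sum_const, Finset.card_range, nsmul_eq_mul]

lemma key_ineq {k : ℕ} (hk1 : 1 ≤ k) (hkn : k ≤ n) (μ d : Fin n → ℝ) (t : ℝ)
    (hmono : Antitone μ) (hd0 : ∀ i, 0 ≤ d i) (hdt : ∀ i, d i ≤ t)
    (hsum : ∑ i, d i = t * k) :
    ∑ i, μ i * d i ≤ t * ∑ i : Fin n, (if (i : ℕ) < k then μ i else 0) := by
  have hkpos : 0 < k := hk1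
  set m := μ ⟨k - 1, by omega⟩ with hm
  have step : ∀ i : Fin n, μ i * d i - t * (if (i : ℕ) < k then μ i else 0)
      ≤ m * d i - m * (if (i : ℕ) < k then t else 0) := by
    intro i
    by_cases h : (i : ℕ) < k
    · simp only [if_pos h]
      have hμ : m ≤ μ i := hmono (by simp [Fin.le_def]; omega)
      nlinarith [hdt i]
    · simp only [if_neg h]
      have hμ : μ i ≤ m := hmono (by simp [Fin.le_def]; omega)
      nlinarith [hd0 i]
  have hsum2 : ∑ i : Fin n, (if (i : ℕ) < k then t else 0) = t * k := by
    rw [mul_comm]; exact sum_ite_const hkn t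
  have h2 := Finset.sum_le_sum (fun i (_ : i ∈ Finset.univ) => step i)
  rw [Finset.sum_sub_distrib, Finset.sum_sub_distrib, ← Finset.mul_sum, ← Finset.mul_sum,
    ← Finset.mul_sum, hsum, hsum2] at h2
  linarith

/-- rank-one matrix facts -/
lemma vecMulVec_isHermitian (u : Fin n → ℝ) : (vecMulVec u u).IsHermitian := by
  ext i j
  simp [Matrix.conjTranspose_apply, Matrix.vecMulVec_apply, mul_comm]

lemma vecMulVec_mulVec' (u v : Fin n → ℝ) : (vecMulVec u u) *ᵥ v = (u ⬝ᵥ v) • u := by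
  ext j
  simp only [Matrix.mulVec, Matrix.vecMulVec_apply, dotProduct, Pi.smul_apply, smul_eq_mul,
    Finset.sum_mul, Finset.mul_sum]
  refine Finset.sum_congr rfl fun l _ => by ring

lemma quad_vecMulVec (u v : Fin n → ℝ) : v ⬝ᵥ ((vecMulVec u u) *ᵥ v) = (u ⬝ᵥ v) ^ 2 := by
  rw [vecMulVec_mulVec', dotProduct_smul, smul_eq_mul, dotProduct_comm]
  ring

lemma trace_vecMulVec_mul (u : Fin n → ℝ) (Y : Matrix (Fin n) (Fin n) ℝ) :
    ((vecMulVec u u) * Y).trace = u ⬝ᵥ (Y *ᵥ u) := by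
  simp only [Matrix.trace, Matrix.diag_apply, Matrix.mul_apply, Matrix.vecMulVec_apply,
    dotProduct, Matrix.mulVec, Finset.mul_sum]
  rw [Finset.sum_comm]
  refine Finset.sum_congr rfl fun a _ => Finset.sum_congr rfl fun b _ => by ring

lemma trace_vecMulVec (u : Fin n → ℝ) : (vecMulVec u u).trace = u ⬝ᵥ u := by
  simp [Matrix.trace, Matrix.vecMulVec_apply, dotProduct]

end Stmt10Aux

/-- For `1 ≤ k ≤ n`, the dual cone of the sum-of-largest-eigenvalues
cone `K_mSum = {(t, X) ∈ ℝ × Sⁿ : ∑_{i=1}^k λ_i(X) ≤ t}` with respect to the inner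
product `⟨(t,X),(s,Y)⟩ = t·s + Tr(XY)` equals
`{(t, X) ∈ ℝ × Sⁿ : −t ≤ λ_i(X) ≤ 0 for all i, ∑_{i=1}^n λ_i(X) = −t·k}`.
Here `Sⁿ` is represented as the subtype of symmetric (Hermitian) real matrices. -/
theorem stmt10 {n : ℕ} (k : ℕ) (hk1 : 1 ≤ k) (hkn : k ≤ n) :
    {y : ℝ × {A : Matrix (Fin n) (Fin n) ℝ // A.IsHermitian} |
        ∀ z ∈ {z : ℝ × {A : Matrix (Fin n) (Fin n) ℝ // A.IsHermitian} |
            (∑ i : Fin n, if (i : ℕ) < k then eigsDesc z.2.1 i else 0) ≤ z.1},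
          y.1 * z.1 + (z.2.1 * y.2.1).trace ≥ 0} =
    {y : ℝ × {A : Matrix (Fin n) (Fin n) ℝ // A.IsHermitian} |
        (∀ i, -y.1 ≤ eigsDesc y.2.1 i ∧ eigsDesc y.2.1 i ≤ 0) ∧
        ∑ i, eigsDesc y.2.1 i = -y.1 * k} := by
  ext y
  simp only [Set.mem_setOf_eq]
  have hY : (y.2.1 : Matrix (Fin n) (Fin n) ℝ).IsHermitian := y.2.2
  constructor
  · intro hy
    -- Step A : quadratic form of Y is nonpositive
    have stepA : ∀ u : Fin n → ℝ, u ⬝ᵥ (y.2.1 *ᵥ u) ≤ 0 := by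
      intro u
      have hM : (-(vecMulVec u u)).IsHermitian := (Stmt10Aux.vecMulVec_isHermitian u).neg
      have hqle : ∀ i, hM.eigenvalues i ≤ 0 := by
        refine Stmt10Aux.eig_le_of_quad hM 0 (fun v => ?_)
        rw [Matrix.neg_mulVec, dotProduct_neg, Stmt10Aux.quad_vecMulVec, zero_mul]
        nlinarith [sq_nonneg (u ⬝ᵥ v)]
      have hmem : (∑ i : Fin n, if (i : ℕ) < k then eigsDesc (-(vecMulVec u u)) i else 0)
          ≤ (0 : ℝ) := by
        refine Finset.sum_nonpos fun i _ => ?_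
        split_ifs with h
        · rw [Stmt10Aux.eigsDesc_apply hM]; exact hqle _
        · exact le_rfl
      have h := hy (0, ⟨-(vecMulVec u u), hM⟩) hmem
      rw [mul_zero, zero_add, Matrix.neg_mul, Matrix.trace_neg,
        Stmt10Aux.trace_vecMulVec_mul] at h
      linarith
    have hYle : ∀ j, hY.eigenvalues j ≤ 0 :=
      Stmt10Aux.eig_le_of_quad hY 0 (fun v => by rw [zero_mul]; exact stepA v)
    -- Step B : eigenvalues of Y are ≥ -t
    have stepB : ∀ j, -y.1 ≤ hY.eigenvalues j := by
      intro j
      set u := ⇑(hY.eigenvectorBasis j) with hu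
      have hM : (vecMulVec u u).IsHermitian := Stmt10Aux.vecMulVec_isHermitian u
      have hge : ∀ i, 0 ≤ hM.eigenvalues i := by
        refine Stmt10Aux.le_eig_of_quad hM 0 (fun v => ?_)
        rw [Stmt10Aux.quad_vecMulVec, zero_mul]
        positivity
      have hmem : (∑ i : Fin n, if (i : ℕ) < k then eigsDesc (vecMulVec u u) i else 0)
          ≤ (1 : ℝ) := by
        have h1 : (∑ i : Fin n, if (i : ℕ) < k then eigsDesc (vecMulVec u u) i else 0)
            ≤ ∑ i, eigsDesc (vecMulVec u u) i := by
          refine Finset.sum_le_sum fun i _ => ?_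
          split_ifs with h
          · exact le_rfl
          · rw [Stmt10Aux.eigsDesc_apply hM]; exact hge _
        rwa [Stmt10Aux.sum_eigsDesc_eq_trace hM, Stmt10Aux.trace_vecMulVec,
          Stmt10Aux.dot_eigenvectorBasis hY j] at h1
      have h := hy (1, ⟨vecMulVec u u, hM⟩) hmem
      rw [mul_one, Stmt10Aux.trace_vecMulVec_mul] at h
      have hval : u ⬝ᵥ (y.2.1 *ᵥ u) = hY.eigenvalues j := by
        rw [hu, hY.mulVec_eigenvectorBasis, dotProduct_smul, smul_eq_mul,
          Stmt10Aux.dot_eigenvectorBasis hY j, mul_one]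
      rw [hval] at h
      linarith
    -- Step C : trace Y ≥ -t k
    have h1herm : (1 : Matrix (Fin n) (Fin n) ℝ).IsHermitian := Matrix.isHermitian_one
    have h1e : ∀ i, h1herm.eigenvalues i = 1 := fun i =>
      le_antisymm
        (Stmt10Aux.eig_le_of_quad _ 1 (fun v => by rw [Matrix.one_mulVec, one_mul]) i)
        (Stmt10Aux.le_eig_of_quad _ 1 (fun v => by rw [Matrix.one_mulVec, one_mul]) i)
    have hmemC : (∑ i : Fin n, if (i : ℕ) < k then eigsDesc (1 : Matrix (Fin n) (Fin n) ℝ) i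
        else 0) ≤ (k : ℝ) := by
      have : (∑ i : Fin n, if (i : ℕ) < k then eigsDesc (1 : Matrix (Fin n) (Fin n) ℝ) i else 0)
          = ∑ i : Fin n, if (i : ℕ) < k then (1 : ℝ) else 0 := by
        refine Finset.sum_congr rfl fun i _ => ?_
        split_ifs with h
        · rw [Stmt10Aux.eigsDesc_apply h1herm, h1e]
        · rfl
      rw [this, Stmt10Aux.sum_ite_const hkn, mul_one]
    have hC := hy ((k : ℝ), ⟨1, h1herm⟩) hmemC
    rw [one_mul] at hC
    -- Step D : trace Y ≤ -t k
    have hm1herm : (-1 : Matrix (Fin n) (Fin n) ℝ).IsHermitian := h1herm.neg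
    have hm1e : ∀ i, hm1herm.eigenvalues i = -1 := fun i =>
      le_antisymm
        (Stmt10Aux.eig_le_of_quad _ (-1) (fun v => le_of_eq (by
          rw [Matrix.neg_mulVec, Matrix.one_mulVec, dotProduct_neg]; ring)) i)
        (Stmt10Aux.le_eig_of_quad _ (-1) (fun v => le_of_eq (by
          rw [Matrix.neg_mulVec, Matrix.one_mulVec, dotProduct_neg]; ring)) i)
    have hmemD : (∑ i : Fin n, if (i : ℕ) < k then eigsDesc (-1 : Matrix (Fin n) (Fin n) ℝ) i
        else 0) ≤ (-(k : ℝ)) := by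
      have : (∑ i : Fin n, if (i : ℕ) < k then eigsDesc (-1 : Matrix (Fin n) (Fin n) ℝ) i else 0)
          = ∑ i : Fin n, if (i : ℕ) < k then (-1 : ℝ) else 0 := by
        refine Finset.sum_congr rfl fun i _ => ?_
        split_ifs with h
        · rw [Stmt10Aux.eigsDesc_apply hm1herm, hm1e]
        · rfl
      rw [this, Stmt10Aux.sum_ite_const hkn]
      linarith
    have hD := hy ((-(k : ℝ)), ⟨-1, hm1herm⟩) hmemD
    rw [neg_one_mul, Matrix.trace_neg] at hD
    -- conclude
    refine ⟨fun i => ?_, ?_⟩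
    · rw [Stmt10Aux.eigsDesc_apply hY]
      exact ⟨stepB _, hYle _⟩
    · have hC' : y.1 * (k : ℝ) + (y.2.1 : Matrix (Fin n) (Fin n) ℝ).trace ≥ 0 := hC
      have hD' : y.1 * (-(k : ℝ)) + -(y.2.1 : Matrix (Fin n) (Fin n) ℝ).trace ≥ 0 := hD
      rw [Stmt10Aux.sum_eigsDesc_eq_trace hY]
      linarith
  · rintro ⟨hbnd, hsum⟩ z hz
    have hX : (z.2.1 : Matrix (Fin n) (Fin n) ℝ).IsHermitian := z.2.2
    have hn : 0 < n := lt_of_lt_of_le hk1 hkn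
    have ht : 0 ≤ y.1 := by
      have h := hbnd ⟨0, hn⟩
      linarith [h.1, h.2]
    have hYle : ∀ j, hY.eigenvalues j ≤ 0 := by
      intro j
      have h := hbnd ((Stmt10Aux.descPerm hY.eigenvalues).symm j)
      rw [Stmt10Aux.eigsDesc_apply hY, Equiv.apply_symm_apply] at h
      exact h.2
    have hYge : ∀ j, -y.1 ≤ hY.eigenvalues j := by
      intro j
      have h := hbnd ((Stmt10Aux.descPerm hY.eigenvalues).symm j)
      rw [Stmt10Aux.eigsDesc_apply hY, Equiv.apply_symm_apply] at h
      exact h.1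
    have htr : (y.2.1 : Matrix (Fin n) (Fin n) ℝ).trace = -y.1 * k := by
      rw [← Stmt10Aux.sum_eigsDesc_eq_trace hY]; exact hsum
    set c : Fin n → ℝ := fun j =>
      ((star (hX.eigenvectorUnitary : Matrix (Fin n) (Fin n) ℝ) * y.2.1 *
        (hX.eigenvectorUnitary : Matrix (Fin n) (Fin n) ℝ)) j j) with hc
    have hcle : ∀ j, c j ≤ 0 := by
      intro j
      have h1 := Stmt10Aux.diag_entry_eq_dot (Y := (y.2.1 : Matrix (Fin n) (Fin n) ℝ))
        (hX.eigenvectorUnitary : Matrix (Fin n) (Fin n) ℝ) j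
      have h2 := Stmt10Aux.quad_le hY 0 hYle
        (fun i => (hX.eigenvectorUnitary : Matrix (Fin n) (Fin n) ℝ) i j)
      rw [zero_mul] at h2
      exact (le_of_eq h1).trans h2
    have hcge : ∀ j, -y.1 ≤ c j := by
      intro j
      have h1 := Stmt10Aux.diag_entry_eq_dot (Y := (y.2.1 : Matrix (Fin n) (Fin n) ℝ))
        (hX.eigenvectorUnitary : Matrix (Fin n) (Fin n) ℝ) j
      have h2 := Stmt10Aux.le_quad hY (-y.1) hYge
        (fun i => (hX.eigenvectorUnitary : Matrix (Fin n) (Fin n) ℝ) i j)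
      rw [Stmt10Aux.column_unit hX j, mul_one] at h2
      exact h2.trans (le_of_eq h1.symm)
    have hsc : ∑ j, c j = -y.1 * k := by
      rw [hc, Stmt10Aux.sum_diag_eq_trace (Y := (y.2.1 : Matrix (Fin n) (Fin n) ℝ)) hX, htr]
    set σ := Stmt10Aux.descPerm hX.eigenvalues with hσ
    have htrace : (z.2.1 * y.2.1).trace = ∑ i, eigsDesc z.2.1 i * c (σ i) := by
      rw [Stmt10Aux.trace_mul_expand hX]
      rw [← Equiv.sum_comp σ (fun j => hX.eigenvalues j * c j)]
      refine Finset.sum_congr rfl fun i _ => ?_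
      rw [Stmt10Aux.eigsDesc_apply hX]
    have hmono : Antitone (eigsDesc z.2.1) :=
      (Stmt10Aux.eigsDesc_herm hX) ▸ Stmt10Aux.antitone_sortDesc hX.eigenvalues
    have hdsum : ∑ i, -(c (σ i)) = y.1 * k := by
      rw [Equiv.sum_comp σ (fun j => -(c j)), Finset.sum_neg_distrib, hsc]
      ring
    have hkey := Stmt10Aux.key_ineq hk1 hkn (eigsDesc z.2.1) (fun i => -(c (σ i))) y.1
      hmono (fun i => (show (0:ℝ) ≤ -(c (σ i)) by linarith [hcle (σ i)]))
      (fun i => (show -(c (σ i)) ≤ y.1 by linarith [hcge (σ i)])) hdsum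
    have hneg : ∑ i, eigsDesc z.2.1 i * -(c (σ i)) = -∑ i, eigsDesc z.2.1 i * c (σ i) := by
      rw [← Finset.sum_neg_distrib]
      exact Finset.sum_congr rfl fun i _ => by ring
    rw [hneg] at hkey
    have hts : y.1 * (∑ i : Fin n, if (i : ℕ) < k then eigsDesc z.2.1 i else 0) ≤ y.1 * z.1 :=
      mul_le_mul_of_nonneg_left hz ht
    rw [htrace]
    linarith
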